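/- Let f₁, f₂ : ℝ → ℝ be twice differentiable with af₁'(u₁)f₂(u₂) + f₁(u₁)f₂'(u₂) ≠ 0 at a point (u₁,u₂). Then the isotropic Gaussian curvature of the graph x = f₁(y+az)f₂(z) at the corresponding point equals [f₁f₂f₁''f₂'' − (f₁'f₂')²] / (af₁'f₂ + f₁f₂')⁴. -/

import Mathlib

noncomputable def wyy (w : ℝ → ℝ → ℝ) (y z : ℝ) : ℝ :=
  deriv (fun t => deriv (fun t' => w t' z) t) y

noncomputable def wzz (w : ℝ → ℝ → ℝ) (y z : ℝ) : ℝ :=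
  deriv (fun s => deriv (fun s' => w y s') s) z

noncomputable def wyz (w : ℝ → ℝ → ℝ) (y z : ℝ) : ℝ :=
  deriv (fun s => deriv (fun t => w t s) y) z

noncomputable def wy (w : ℝ → ℝ → ℝ) (y z : ℝ) : ℝ := deriv (fun t => w t z) y

noncomputable def wz (w : ℝ → ℝ → ℝ) (y z : ℝ) : ℝ := deriv (fun s => w y s) z

/-- Isotropic Gaussian curvature of the graph x = w(y,z). -/
noncomputable def K2 (w : ℝ → ℝ → ℝ) (y z : ℝ) : ℝ :=
  (wyy w y z * wzz w y z - (wyz w y z)^2) / (wz w y z)^4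

/-- Isotropic mean curvature of the graph x = w(y,z). -/
noncomputable def H2 (w : ℝ → ℝ → ℝ) (y z : ℝ) : ℝ :=
  ((wz w y z)^2 * wyy w y z - 2 * wy w y z * wz w y z * wyz w y z
    + (1 + (wy w y z)^2) * wzz w y z) / (2 * (wz w y z)^3)

noncomputable def D2 (f : ℝ → ℝ) : ℝ → ℝ := deriv (deriv f)

theorem stmt12 (a : ℝ) (ha : a ≠ 0) (f₁ f₂ : ℝ → ℝ)
    (hf₁ : ∀ t, DifferentiableAt ℝ f₁ t) (hf₁' : ∀ t, DifferentiableAt ℝ (deriv f₁) t)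
    (hf₂ : ∀ t, DifferentiableAt ℝ f₂ t) (hf₂' : ∀ t, DifferentiableAt ℝ (deriv f₂) t)
    (y z : ℝ)
    (hreg : a * deriv f₁ (y + a * z) * f₂ z + f₁ (y + a * z) * deriv f₂ z ≠ 0) :
    K2 (fun y z => f₁ (y + a * z) * f₂ z) y z =
      (f₁ (y + a * z) * f₂ z * D2 f₁ (y + a * z) * D2 f₂ z
        - (deriv f₁ (y + a * z) * deriv f₂ z)^2) /
      (a * deriv f₁ (y + a * z) * f₂ z + f₁ (y + a * z) * deriv f₂ z)^4 := by
  have hinner : ∀ s t : ℝ, HasDerivAt (fun u => t + a * u) a s := by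
    intro s t
    simpa using ((hasDerivAt_id s).const_mul a).const_add t
  -- y-derivative of w
  have hdy : ∀ t s : ℝ, HasDerivAt (fun t' => f₁ (t' + a * s) * f₂ s)
      (deriv f₁ (t + a * s) * f₂ s) t := by
    intro t s
    have h1 : HasDerivAt (fun t' => f₁ (t' + a * s)) (deriv f₁ (t + a * s)) t := by
      simpa [Function.comp_def] using (HasDerivAt.comp t (hf₁ (t + a * s)).hasDerivAt
        ((hasDerivAt_id t).add_const (a * s)))
    exact h1.mul_const _
  -- z-derivative of w
  have hdz : ∀ t s : ℝ, HasDerivAt (fun s' => f₁ (t + a * s') * f₂ s')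
      (deriv f₁ (t + a * s) * a * f₂ s + f₁ (t + a * s) * deriv f₂ s) s := by
    intro t s
    have h1 : HasDerivAt (fun s' => f₁ (t + a * s')) (deriv f₁ (t + a * s) * a) s :=
      HasDerivAt.comp s (hf₁ (t + a * s)).hasDerivAt (hinner s t)
    exact h1.mul (hf₂ s).hasDerivAt
  have hwy : wy (fun y z => f₁ (y + a * z) * f₂ z) y z = deriv f₁ (y + a * z) * f₂ z := by
    simpa [wy] using (hdy y z).deriv
  have hwz : wz (fun y z => f₁ (y + a * z) * f₂ z) y z
      = deriv f₁ (y + a * z) * a * f₂ z + f₁ (y + a * z) * deriv f₂ z := by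
    simpa [wz] using (hdz y z).deriv
  -- wyy
  have hwyy : wyy (fun y z => f₁ (y + a * z) * f₂ z) y z
      = D2 f₁ (y + a * z) * f₂ z := by
    have he : (fun t => deriv (fun t' => f₁ (t' + a * z) * f₂ z) t)
        = fun t => deriv f₁ (t + a * z) * f₂ z := by
      funext t; exact (hdy t z).deriv
    have h1 : HasDerivAt (fun t => deriv f₁ (t + a * z)) (D2 f₁ (y + a * z)) y := by
      simpa [D2, Function.comp_def] using (HasDerivAt.comp y (hf₁' (y + a * z)).hasDerivAt
        ((hasDerivAt_id y).add_const (a * z)))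
    simpa [wyy, he] using (h1.mul_const (f₂ z)).deriv
  -- wzz
  have hwzz : wzz (fun y z => f₁ (y + a * z) * f₂ z) y z
      = D2 f₁ (y + a * z) * a * a * f₂ z + deriv f₁ (y + a * z) * a * deriv f₂ z
        + (deriv f₁ (y + a * z) * a * deriv f₂ z + f₁ (y + a * z) * D2 f₂ z) := by
    have he : (fun s => deriv (fun s' => f₁ (y + a * s') * f₂ s') s)
        = fun s => deriv f₁ (y + a * s) * a * f₂ s + f₁ (y + a * s) * deriv f₂ s := by
      funext s; exact (hdz y s).deriv
    have h1 : HasDerivAt (fun s => deriv f₁ (y + a * s)) (D2 f₁ (y + a * z) * a) z := by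
      simpa [D2, Function.comp_def] using HasDerivAt.comp z (hf₁' (y + a * z)).hasDerivAt (hinner z y)
    have h2 : HasDerivAt (fun s => f₁ (y + a * s)) (deriv f₁ (y + a * z) * a) z :=
      HasDerivAt.comp z (hf₁ (y + a * z)).hasDerivAt (hinner z y)
    have h3 : HasDerivAt
        (fun s => deriv f₁ (y + a * s) * a * f₂ s + f₁ (y + a * s) * deriv f₂ s)
        (D2 f₁ (y + a * z) * a * a * f₂ z + deriv f₁ (y + a * z) * a * deriv f₂ z
          + (deriv f₁ (y + a * z) * a * deriv f₂ z + f₁ (y + a * z) * D2 f₂ z)) z := by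
      have := ((h1.mul_const a).mul (hf₂ z).hasDerivAt).add
        (h2.mul (hf₂' z).hasDerivAt)
      exact this
    simpa [wzz, he] using h3.deriv
  -- wyz
  have hwyz : wyz (fun y z => f₁ (y + a * z) * f₂ z) y z
      = D2 f₁ (y + a * z) * a * f₂ z + deriv f₁ (y + a * z) * deriv f₂ z := by
    have he : (fun s => deriv (fun t => f₁ (t + a * s) * f₂ s) y)
        = fun s => deriv f₁ (y + a * s) * f₂ s := by
      funext s; exact (hdy y s).deriv
    have h1 : HasDerivAt (fun s => deriv f₁ (y + a * s)) (D2 f₁ (y + a * z) * a) z := by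
      simpa [D2, Function.comp_def] using HasDerivAt.comp z (hf₁' (y + a * z)).hasDerivAt (hinner z y)
    have h3 : HasDerivAt (fun s => deriv f₁ (y + a * s) * f₂ s)
        (D2 f₁ (y + a * z) * a * f₂ z + deriv f₁ (y + a * z) * deriv f₂ z) z :=
      h1.mul (hf₂ z).hasDerivAt
    have he2 : (fun s => deriv (fun x => f₁ (x + a * s)) y * f₂ s)
        = fun s => deriv f₁ (y + a * s) * f₂ s := by
      funext s
      congr 1
      simpa [Function.comp_def] using (HasDerivAt.comp y (hf₁ (y + a * s)).hasDerivAt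
        ((hasDerivAt_id y).add_const (a * s))).deriv
    simpa [wyz, he, he2] using h3.deriv
  rw [K2, hwyy, hwzz, hwyz, hwz]
  have hden : deriv f₁ (y + a * z) * a * f₂ z + f₁ (y + a * z) * deriv f₂ z
      = a * deriv f₁ (y + a * z) * f₂ z + f₁ (y + a * z) * deriv f₂ z := by ring
  rw [hden]
  congr 1
  ring
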